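/- Let l ≥ 1 be an integer and a, b ∈ ℝ, and suppose r ≥ |a| + |b| + 1. Then for every n ∈ {1,…,l} there exists a real eigenvalue E of the real symmetric matrix D_r^{a,b} such that |E − 2r²·cos(πn/(l+1))| ≤ 3r. -/

import Mathlib

open Real Finset

/-- The discrete Dirichlet Laplacian on `{1,…,l}` (indices shifted to `Fin l`). -/
noncomputable def lapMat (l : ℕ) : Matrix (Fin l) (Fin l) ℝ :=
  fun x y => if (x : ℤ) = (y : ℤ) + 1 ∨ (y : ℤ) = (x : ℤ) + 1 then 1 else 0

/-- The matrix `D_r^{a,b} = r² Δ_l + (a+r) E_{1,1} + (b+r) E_{l,l}`. -/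
noncomputable def Dmat (l : ℕ) (a b r : ℝ) : Matrix (Fin l) (Fin l) ℝ :=
  fun x y =>
    r^2 * lapMat l x y
    + (if (x : ℕ) = 0 ∧ (y : ℕ) = 0 then a + r else 0)
    + (if (x : ℕ) = l - 1 ∧ (y : ℕ) = l - 1 then b + r else 0)

lemma normsq_eq {l : ℕ} (y : EuclideanSpace ℝ (Fin l)) : ‖y‖^2 = ∑ x, (y x)^2 := by
  rw [EuclideanSpace.norm_eq, Real.sq_sqrt (by positivity)]
  simp [sq_abs]

lemma resid {l : ℕ} {A : Matrix (Fin l) (Fin l) ℝ} (hA : A.IsHermitian)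
    (v : EuclideanSpace ℝ (Fin l)) (hv : v ≠ 0) (μ ε : ℝ) (hε : 0 ≤ ε)
    (h : ∀ x, |A.mulVec v x - μ * v x| ≤ ε * |v x|) :
    ∃ E ∈ spectrum ℝ A, |E - μ| ≤ ε := by
  by_contra hcon
  push_neg at hcon
  set b := hA.eigenvectorBasis with hb
  set w : EuclideanSpace ℝ (Fin l) := WithLp.toLp 2 (fun x => A.mulVec v x - μ * v x) with hw
  have hinner : ∀ (i : Fin l) (y : EuclideanSpace ℝ (Fin l)),
      (inner ℝ (b i) y : ℝ) = ∑ x, b i x * y x := by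
    intro i y
    simp [PiLp.inner_apply, RCLike.inner_apply, starRingEnd_apply, mul_comm]
  have hAv : ∀ i : Fin l, ∑ x, b i x * A.mulVec v x = hA.eigenvalues i * ∑ x, b i x * v x := by
    intro i
    have h1 := Matrix.dotProduct_mulVec (R := ℝ) (b i) A v
    have h2 : Matrix.vecMul (b i) A = A.mulVec (b i) := by
      conv_lhs => rw [← hA.eq]
      rw [Matrix.conjTranspose_eq_transpose_of_trivial, Matrix.vecMul_transpose]
    have h3 := hA.mulVec_eigenvectorBasis i
    have h4 : A.mulVec (b i) = fun x => hA.eigenvalues i * b i x := by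
      funext x
      have h5 := congrFun h3 x
      simpa using h5
    rw [h2, h4] at h1
    simpa [dotProduct, Finset.mul_sum, mul_assoc, mul_comm, mul_left_comm] using h1
  have hrepr : ∀ i, b.repr w i = (hA.eigenvalues i - μ) * b.repr v i := by
    intro i
    rw [b.repr_apply_apply, b.repr_apply_apply, hinner, hinner]
    simp only [hw]
    rw [show (∑ x, b i x * (A.mulVec v x - μ * v x)) =
        (∑ x, b i x * A.mulVec v x) - μ * ∑ x, b i x * v x by
      rw [Finset.mul_sum, ← Finset.sum_sub_distrib]; congr 1; ext x; ring]
    rw [hAv]; ring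
  have hnw : ∑ i, ((hA.eigenvalues i - μ) * b.repr v i)^2 = ∑ x, (w x)^2 := by
    have := normsq_eq (b.repr w)
    rw [LinearIsometryEquiv.norm_map, normsq_eq w] at this
    rw [this]
    exact Finset.sum_congr rfl fun i _ => by rw [hrepr]
  have hnv : ∑ i, (b.repr v i)^2 = ∑ x, (v x)^2 := by
    have := normsq_eq (b.repr v)
    rw [LinearIsometryEquiv.norm_map, normsq_eq v] at this
    exact this.symm
  have hub : ∑ x, (w x)^2 ≤ ε^2 * ∑ i, (b.repr v i)^2 := by
    rw [hnv, Finset.mul_sum]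
    apply Finset.sum_le_sum
    intro x _
    have := h x
    calc (w x)^2 = |A.mulVec v x - μ * v x|^2 := by rw [sq_abs]
      _ ≤ (ε * |v x|)^2 := by apply pow_le_pow_left₀ (abs_nonneg _) this
      _ = ε^2 * (v x)^2 := by rw [mul_pow, sq_abs]
  have hvr : b.repr v ≠ 0 := fun h0 => hv (by simpa using congrArg b.repr.symm h0)
  obtain ⟨i0, hi0⟩ : ∃ i, b.repr v i ≠ 0 := by
    by_contra hc; push_neg at hc; exact hvr (PiLp.ext hc)
  have hlb : ∑ i, ε^2 * (b.repr v i)^2 < ∑ i, ((hA.eigenvalues i - μ) * b.repr v i)^2 := by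
    apply Finset.sum_lt_sum
    · intro i _
      rw [mul_pow]
      apply mul_le_mul_of_nonneg_right _ (sq_nonneg _)
      have hsp := hA.eigenvalues_mem_spectrum_real i
      have := hcon _ hsp
      nlinarith [abs_nonneg (hA.eigenvalues i - μ), sq_abs (hA.eigenvalues i - μ)]
    · refine ⟨i0, Finset.mem_univ _, ?_⟩
      rw [mul_pow]
      apply mul_lt_mul_of_pos_right _ (by positivity)
      have hsp := hA.eigenvalues_mem_spectrum_real i0
      have := hcon _ hsp
      nlinarith [abs_nonneg (hA.eigenvalues i0 - μ), sq_abs (hA.eigenvalues i0 - μ)]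
  rw [← Finset.mul_sum] at hlb
  rw [hnw] at hlb
  exact absurd hub (not_le.mpr hlb)

theorem stmt_11 (l : ℕ) (hl : 1 ≤ l) (a b r : ℝ) (hr : |a| + |b| + 1 ≤ r) (n : Fin l) :
    ∃ E : ℝ, E ∈ spectrum ℝ (Dmat l a b r) ∧
      |E - 2*r^2*Real.cos (π*((n : ℕ)+1)/((l : ℝ)+1))| ≤ 3*r := by
  set θ : ℝ := π*((n : ℕ)+1)/((l : ℝ)+1) with hθ
  have hl1 : (0:ℝ) < (l:ℝ)+1 := by positivity
  have hrpos : (1:ℝ) ≤ r := by linarith [abs_nonneg a, abs_nonneg b]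
  set v : EuclideanSpace ℝ (Fin l) := WithLp.toLp 2 (fun x : Fin l => Real.sin (θ*((x:ℕ)+1))) with hv
  have hA : (Dmat l a b r).IsHermitian := by
    show (Dmat l a b r).conjTranspose = Dmat l a b r
    ext x y
    simp only [Matrix.conjTranspose_apply, Dmat, lapMat, star_trivial]
    simp only [or_comm, and_comm]
  have hsl : Real.sin (θ*((l:ℝ)+1)) = 0 := by
    have h1 : θ*((l:ℝ)+1) = ((n:ℕ)+1 : ℕ) * π := by
      rw [hθ]
      field_simp
      push_cast
      ring
    rw [h1, Real.sin_nat_mul_pi]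
  have hmain : ∀ x : Fin l, (Dmat l a b r).mulVec v x = 2*r^2*Real.cos θ * v x +
      ((if (x:ℕ) = 0 then a+r else 0) + (if (x:ℕ) = l-1 then b+r else 0)) * v x := by
    intro x
    have hxl := x.isLt
    have expand : (Dmat l a b r).mulVec v x =
        r^2 * ((∑ y : Fin l, (if (x : ℤ) = (y : ℤ) + 1 then v y else 0))
             + ∑ y : Fin l, (if (y : ℤ) = (x : ℤ) + 1 then v y else 0))
        + (∑ y : Fin l, (if (x:ℕ) = 0 ∧ (y:ℕ) = 0 then (a+r) * v y else 0))
        + (∑ y : Fin l, (if (x:ℕ) = l-1 ∧ (y:ℕ) = l-1 then (b+r) * v y else 0)) := by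
      show (∑ y : Fin l, Dmat l a b r x y * v y) = _
      have key : ∀ y ∈ Finset.univ, Dmat l a b r x y * v y =
          (if (x : ℤ) = (y : ℤ) + 1 then r^2 * v y else 0)
          + (if (y : ℤ) = (x : ℤ) + 1 then r^2 * v y else 0)
          + (if (x:ℕ) = 0 ∧ (y:ℕ) = 0 then (a+r) * v y else 0)
          + (if (x:ℕ) = l-1 ∧ (y:ℕ) = l-1 then (b+r) * v y else 0) := by
        intro y _
        simp only [Dmat, lapMat]
        by_cases h1 : (x : ℤ) = (y : ℤ) + 1
        · have h2 : ¬((y : ℤ) = (x : ℤ) + 1) := by omega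
          rw [if_pos (Or.inl h1), if_pos h1, if_neg h2]
          simp only [ite_mul, zero_mul, add_mul]
          ring
        · by_cases h2 : (y : ℤ) = (x : ℤ) + 1
          · rw [if_pos (Or.inr h2), if_neg h1, if_pos h2]
            simp only [ite_mul, zero_mul, add_mul]
            ring
          · have hor : ¬((x : ℤ) = (y : ℤ) + 1 ∨ (y : ℤ) = (x : ℤ) + 1) := by omega
            rw [if_neg hor, if_neg h1, if_neg h2]
            simp only [ite_mul, zero_mul, add_mul]
            ring
      rw [Finset.sum_congr rfl key, Finset.sum_add_distrib, Finset.sum_add_distrib,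
        Finset.sum_add_distrib, mul_add, Finset.mul_sum, Finset.mul_sum]
      simp only [mul_ite, mul_zero]
    have S1 : (∑ y : Fin l, (if (x : ℤ) = (y : ℤ) + 1 then v y else 0))
        = Real.sin (θ * (x:ℕ)) := by
      rcases Nat.eq_zero_or_pos (x:ℕ) with hx | hx
      · rw [Finset.sum_eq_zero, hx]
        · simp
        · intro y _
          rw [if_neg]; omega
      · obtain ⟨k, hk⟩ : ∃ k, (x:ℕ) = k+1 := ⟨(x:ℕ)-1, by omega⟩
        have hkl : k < l := by omega
        rw [Finset.sum_eq_single (⟨k, hkl⟩ : Fin l)]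
        · rw [if_pos (show (x:ℤ) = ((⟨k, hkl⟩ : Fin l) : ℤ) + 1 from by show (x:ℤ) = (k:ℤ) + 1; omega)]
          simp only [hv, hk]
          norm_num
        · intro y _ hy
          rw [if_neg]
          intro hc
          exact hy (Fin.ext (show (y:ℕ) = k by omega))
        · intro hmem; exact absurd (Finset.mem_univ _) hmem
    have S2 : (∑ y : Fin l, (if (y : ℤ) = (x : ℤ) + 1 then v y else 0))
        = Real.sin (θ * ((x:ℕ)+2)) := by
      by_cases hx : (x:ℕ)+1 < l
      · rw [Finset.sum_eq_single (⟨(x:ℕ)+1, hx⟩ : Fin l)]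
        · rw [if_pos (show ((⟨(x:ℕ)+1, hx⟩ : Fin l) : ℤ) = (x:ℤ) + 1 from by show ((((x:ℕ)+1 : ℕ)):ℤ) = (x:ℤ) + 1; omega)]
          simp only [hv]
          norm_num
          ring_nf
        · intro y _ hy
          rw [if_neg]
          intro hc
          exact hy (Fin.ext (show (y:ℕ) = (x:ℕ)+1 by omega))
        · intro hmem; exact absurd (Finset.mem_univ _) hmem
      · have hx2 : (x:ℕ) + 2 = l + 1 := by omega
        rw [Finset.sum_eq_zero]
        · have h2 : ((x:ℕ):ℝ) + 2 = (l:ℝ) + 1 := by exact_mod_cast congrArg (Nat.cast : ℕ → ℝ) hx2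
          rw [show θ * (((x:ℕ):ℝ)+2) = θ * ((l:ℝ)+1) by rw [h2], hsl]
        · intro y _
          rw [if_neg]
          omega
    have Sa : (∑ y : Fin l, (if (x:ℕ) = 0 ∧ (y:ℕ) = 0 then (a+r) * v y else 0))
        = (if (x:ℕ) = 0 then a+r else 0) * v x := by
      by_cases hx : (x:ℕ) = 0
      · rw [Finset.sum_eq_single x]
        · rw [if_pos ⟨hx, hx⟩, if_pos hx]
        · intro y _ hy
          rw [if_neg]
          exact fun hc => hy (Fin.ext (by omega))
        · intro hmem; exact absurd (Finset.mem_univ _) hmem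
      · rw [Finset.sum_eq_zero, if_neg hx, zero_mul]
        intro y _
        rw [if_neg]
        tauto
    have Sb : (∑ y : Fin l, (if (x:ℕ) = l-1 ∧ (y:ℕ) = l-1 then (b+r) * v y else 0))
        = (if (x:ℕ) = l-1 then b+r else 0) * v x := by
      by_cases hx : (x:ℕ) = l-1
      · rw [Finset.sum_eq_single x]
        · rw [if_pos ⟨hx, hx⟩, if_pos hx]
        · intro y _ hy
          rw [if_neg]
          exact fun hc => hy (Fin.ext (by omega))
        · intro hmem; exact absurd (Finset.mem_univ _) hmem
      · rw [Finset.sum_eq_zero, if_neg hx, zero_mul]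
        intro y _
        rw [if_neg]
        tauto
    have trig : Real.sin (θ * (x:ℕ)) + Real.sin (θ * ((x:ℕ)+2))
        = 2 * Real.cos θ * Real.sin (θ * ((x:ℕ)+1)) := by
      rw [show θ * ((x:ℕ):ℝ) = θ * (((x:ℕ):ℝ)+1) - θ by ring,
        show θ * (((x:ℕ):ℝ)+2) = θ * (((x:ℕ):ℝ)+1) + θ by ring,
        Real.sin_sub, Real.sin_add]
      ring
    rw [expand, S1, S2, Sa, Sb]
    have hvx : v x = Real.sin (θ * ((x:ℕ)+1)) := by simp only [hv]
    rw [hvx, trig]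
    ring
  have hθpos : 0 < θ := by rw [hθ]; positivity
  have hθlt : θ < π := by
    rw [hθ, div_lt_iff₀ hl1]
    have hn := n.isLt
    have : ((n:ℕ):ℝ) + 1 < (l:ℝ) + 1 := by
      have : ((n:ℕ):ℝ) < (l:ℝ) := by exact_mod_cast hn
      linarith
    nlinarith [Real.pi_pos]
  have hsin : 0 < Real.sin θ := Real.sin_pos_of_pos_of_lt_pi hθpos hθlt
  have hv0 : v ≠ 0 := by
    intro h0
    have h1 : v ⟨0, by omega⟩ = 0 := by rw [h0]; rfl
    simp only [hv] at h1
    norm_num at h1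
    linarith
  have hbound : ∀ x, |(Dmat l a b r).mulVec v x - (2*r^2*Real.cos θ) * v x| ≤ (3*r) * |v x| := by
    intro x
    rw [hmain x,
      show 2*r^2*Real.cos θ * v x + ((if (x:ℕ) = 0 then a+r else 0)
          + (if (x:ℕ) = l-1 then b+r else 0)) * v x - 2*r^2*Real.cos θ * v x
        = ((if (x:ℕ) = 0 then a+r else 0) + (if (x:ℕ) = l-1 then b+r else 0)) * v x by ring,
      abs_mul]
    apply mul_le_mul_of_nonneg_right _ (abs_nonneg _)
    have h1 := le_abs_self a
    have h2 := neg_abs_le a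
    have h3 := le_abs_self b
    have h4 := neg_abs_le b
    have h5 := abs_nonneg a
    have h6 := abs_nonneg b
    split_ifs <;> (rw [abs_le]; constructor <;> linarith)
  obtain ⟨E, hE, hEb⟩ := resid hA v hv0 (2*r^2*Real.cos θ) (3*r) (by linarith) hbound
  exact ⟨E, hE, hEb⟩
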